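/- Let d be a positive integer and let ∇J ∈ ℝ^d, d_k ∈ ℝ^d with d_k ≠ 0, and set ê = d_k − ∇J. If ‖ê‖ ≥ (1/2)‖∇J‖, then −⟨∇J, d_k⟩/‖d_k‖ ≤ −(1/3)‖∇J‖ + (8/3)‖ê‖. -/

import Mathlib

theorem normalized_descent_large_error (d : ℕ) (hd : 0 < d)
    (gradJ dk : EuclideanSpace ℝ (Fin d)) (hdk : dk ≠ 0)
    (h : (1 / 2) * ‖gradJ‖ ≤ ‖dk - gradJ‖) :
    -inner ℝ gradJ dk / ‖dk‖ ≤ -(1 / 3) * ‖gradJ‖ + (8 / 3) * ‖dk - gradJ‖ := by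
  have hpos : (0:ℝ) < ‖dk‖ := norm_pos_iff.mpr hdk
  have hcs : -inner ℝ gradJ dk ≤ ‖gradJ‖ * ‖dk‖ := by
    have := abs_real_inner_le_norm gradJ dk
    have := neg_le_of_abs_le this
    linarith
  have h1 : -inner ℝ gradJ dk / ‖dk‖ ≤ ‖gradJ‖ := by
    rw [div_le_iff₀ hpos]
    exact hcs
  linarith
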